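/- For all positive integers m, n, k, ℓ with ℓ ≤ k: a_{mn,k,ℓ} ≤ m^{k-1}·a_{n,k,ℓ}, where a_{N,k,ℓ} denotes the minimum number of ℓ-rooks needed to cover {0,...,N-1}^k. -/

import Mathlib

/-- An ℓ-rook in `{0,...,n-1}^k`: a point together with a set of chosen coordinate
directions. -/
abbrev Rook (n k : ℕ) := (Fin k → Fin n) × Finset (Fin k)

/-- A rook covers itself and every point differing from it in exactly one of its
chosen coordinates. -/
def Rook.covers {n k : ℕ} (R : Rook n k) (q : Fin k → Fin n) : Prop :=
  q = R.1 ∨ ∃ i ∈ R.2, q i ≠ R.1 i ∧ ∀ j, j ≠ i → q j = R.1 j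

/-- `S` is a covering of the hypercube by ℓ-rooks. -/
def IsCover (n k ℓ : ℕ) (S : Finset (Rook n k)) : Prop :=
  (∀ R ∈ S, R.2.card = ℓ) ∧ ∀ q : Fin k → Fin n, ∃ R ∈ S, R.covers q

/-- `aval n k ℓ` : the minimum number of ℓ-rooks needed to cover `{0,...,n-1}^k`. -/
noncomputable def aval (n k ℓ : ℕ) : ℕ :=
  sInf {s | ∃ S : Finset (Rook n k), IsCover n k ℓ S ∧ S.card = s}

section aux

variable {m : ℕ} [NeZero m]

/-- A parametrization of the diagonal code: the last coordinate is determined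
so that the total sum is `0` mod `m`. -/
noncomputable def Fcode (k' : ℕ) (e : Fin k' → Fin m) : Fin (k' + 1) → Fin m :=
  Fin.snoc e ⟨(- ∑ j, ((e j : ℕ) : ZMod m)).val, ZMod.val_lt _⟩

lemma toZ_ofZ (z : ZMod m) : ((z.val : ℕ) : ZMod m) = z := ZMod.natCast_rightInverse z

lemma ofZ_toZ (x : Fin m) : (((x : ℕ) : ZMod m)).val = (x : ℕ) :=
  ZMod.val_cast_of_lt x.isLt

/-- For any point `a` and any direction `i`, some point of the diagonal code agrees
with `a` in all coordinates other than `i`. -/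
lemma code_agree (k' : ℕ) (a : Fin (k' + 1) → Fin m) (i : Fin (k' + 1)) :
    ∃ e : Fin k' → Fin m, ∀ j, j ≠ i → Fcode k' e j = a j := by
  rcases Fin.eq_castSucc_or_eq_last i with ⟨i', rfl⟩ | rfl
  · -- i = castSucc i'
    classical
    set f : Fin k' → Fin m := fun j => a j.castSucc with hf
    set w : Fin m :=
      ⟨(- ((a (Fin.last k') : ℕ) : ZMod m)
        - ∑ j ∈ Finset.univ.erase i', ((f j : ℕ) : ZMod m)).val, ZMod.val_lt _⟩ with hw
    refine ⟨Function.update f i' w, fun j hj => ?_⟩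
    rcases Fin.eq_castSucc_or_eq_last j with ⟨j', rfl⟩ | rfl
    · have hj' : j' ≠ i' := fun h => hj (by rw [h])
      simp [Fcode, Fin.snoc_castSucc, Function.update_of_ne hj', hf]
    · -- j = last
      have hsum : (∑ j, (((Function.update f i' w) j : ℕ) : ZMod m))
          = ((w : ℕ) : ZMod m) + ∑ j ∈ Finset.univ.erase i', ((f j : ℕ) : ZMod m) := by
        rw [← Finset.add_sum_erase _ _ (Finset.mem_univ i')]
        congr 1
        · rw [Function.update_self]
        · refine Finset.sum_congr rfl fun j hj => ?_
          rw [Function.update_of_ne (Finset.ne_of_mem_erase hj)]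
      have hwz : ((w : ℕ) : ZMod m)
          = - ((a (Fin.last k') : ℕ) : ZMod m)
            - ∑ j ∈ Finset.univ.erase i', ((f j : ℕ) : ZMod m) := by
        rw [hw]; exact toZ_ofZ _
      have : Fcode k' (Function.update f i' w) (Fin.last k')
          = ⟨(- ∑ j, (((Function.update f i' w) j : ℕ) : ZMod m)).val, ZMod.val_lt _⟩ := by
        simp [Fcode, Fin.snoc_last]
      rw [this]
      apply Fin.ext
      simp only [hsum, hwz]
      have : -(- ((a (Fin.last k') : ℕ) : ZMod m)
            - ∑ j ∈ Finset.univ.erase i', ((f j : ℕ) : ZMod m)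
            + ∑ j ∈ Finset.univ.erase i', ((f j : ℕ) : ZMod m))
          = ((a (Fin.last k') : ℕ) : ZMod m) := by ring
      rw [this, ofZ_toZ]
  · -- i = last
    refine ⟨fun j => a j.castSucc, fun j hj => ?_⟩
    rcases Fin.eq_castSucc_or_eq_last j with ⟨j', rfl⟩ | rfl
    · simp [Fcode, Fin.snoc_castSucc]
    · exact absurd rfl hj

end aux

lemma blow_lt {m n a b : ℕ} (ha : a < m) (hb : b < n) : a * n + b < m * n := by
  have h : (a + 1) * n ≤ m * n := Nat.mul_le_mul_right n ha
  have h2 : (a + 1) * n = a * n + n := by ring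
  omega

theorem aval_blowup (m n k ℓ : ℕ) (hm : 0 < m) (hn : 0 < n) (hℓ : 0 < ℓ) (hlk : ℓ ≤ k) :
    aval (m * n) k ℓ ≤ m ^ (k - 1) * aval n k ℓ := by
  classical
  obtain ⟨k', rfl⟩ : ∃ k', k = k' + 1 := ⟨k - 1, by omega⟩
  haveI : NeZero m := ⟨hm.ne'⟩
  -- there is at least one cover of the n-cube
  have hne : {s | ∃ S : Finset (Rook n (k' + 1)), IsCover n (k' + 1) ℓ S ∧ S.card = s}.Nonempty := by
    obtain ⟨T, -, hT⟩ := Finset.exists_subset_card_eq (s := (Finset.univ : Finset (Fin (k' + 1)))) (n := ℓ)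
      (by simpa using hlk)
    refine ⟨_, (Finset.univ : Finset (Fin (k' + 1) → Fin n)).image
      (fun p => ((p, T) : Rook n (k' + 1))), ⟨?_, ?_⟩, rfl⟩
    · intro R hR
      obtain ⟨p, -, rfl⟩ := Finset.mem_image.1 hR
      exact hT
    · intro q
      exact ⟨(q, T), Finset.mem_image.2 ⟨q, Finset.mem_univ _, rfl⟩, Or.inl rfl⟩
  obtain ⟨S, hS, hcard⟩ := Nat.sInf_mem hne
  -- the blow-up map
  set G : Rook n (k' + 1) × (Fin k' → Fin m) → Rook (m * n) (k' + 1) :=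
    fun Re => (fun j => ⟨(Fcode k' Re.2 j : ℕ) * n + (Re.1.1 j : ℕ),
      blow_lt (Fcode k' Re.2 j).isLt (Re.1.1 j).isLt⟩, Re.1.2) with hG
  have hcov : IsCover (m * n) (k' + 1) ℓ ((S ×ˢ Finset.univ).image G) := by
    constructor
    · intro R hR
      obtain ⟨⟨R', e⟩, hmem, rfl⟩ := Finset.mem_image.1 hR
      exact hS.1 R' (Finset.mem_product.1 hmem).1
    · intro q
      -- split each coordinate into quotient and remainder
      set a : Fin (k' + 1) → Fin m := fun j => ⟨(q j : ℕ) / n, by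
        rw [Nat.div_lt_iff_lt_mul hn]; have := (q j).isLt
        calc ((q j : ℕ)) < m * n := this
          _ = m * n := rfl⟩ with ha
      set b : Fin (k' + 1) → Fin n := fun j => ⟨(q j : ℕ) % n, Nat.mod_lt _ hn⟩ with hb
      obtain ⟨R, hRS, hRcov⟩ := hS.2 b
      have hcardR : R.2.card = ℓ := hS.1 R hRS
      have hiex : ∃ i ∈ R.2, ∀ j, j ≠ i → b j = R.1 j := by
        rcases hRcov with h | ⟨i, hi, -, hag⟩
        · obtain ⟨i, hi⟩ := Finset.card_pos.1 (by omega : 0 < R.2.card)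
          exact ⟨i, hi, fun j _ => by rw [h]⟩
        · exact ⟨i, hi, hag⟩
      obtain ⟨i, hiT, hag⟩ := hiex
      obtain ⟨e, he⟩ := code_agree k' a i
      refine ⟨G (R, e), Finset.mem_image.2 ⟨(R, e),
        Finset.mem_product.2 ⟨hRS, Finset.mem_univ _⟩, rfl⟩, ?_⟩
      have hagree : ∀ j, j ≠ i → q j = (G (R, e)).1 j := by
        intro j hj
        have h1 : Fcode k' e j = a j := he j hj
        have h2 : R.1 j = b j := (hag j hj).symm
        apply Fin.ext
        show (q j : ℕ) = (Fcode k' e j : ℕ) * n + (R.1 j : ℕ)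
        rw [h1, h2]
        show (q j : ℕ) = (q j : ℕ) / n * n + (q j : ℕ) % n
        exact (Nat.div_add_mod' _ _).symm
      by_cases hqi : q i = (G (R, e)).1 i
      · left
        funext j
        by_cases hj : j = i
        · rw [hj]; exact hqi
        · exact hagree j hj
      · right
        exact ⟨i, hiT, hqi, hagree⟩
  have hle : aval (m * n) (k' + 1) ℓ ≤ ((S ×ˢ Finset.univ).image G).card :=
    Nat.sInf_le ⟨_, hcov, rfl⟩
  refine hle.trans ?_
  calc ((S ×ˢ Finset.univ).image G).card ≤ (S ×ˢ (Finset.univ : Finset (Fin k' → Fin m))).card :=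
        Finset.card_image_le
    _ = S.card * m ^ k' := by
        rw [Finset.card_product, Finset.card_univ]
        simp [Fintype.card_fun]
    _ = m ^ (k' + 1 - 1) * aval n (k' + 1) ℓ := by rw [hcard, Nat.mul_comm]; rfl
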